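/- For every n ≥ 1, the operator ρ_n on ℂ^{Ω_n} whose matrix entries are D_n(ω, ω') = a_n(ω) · conj(a_n(ω')) is a q-probability operator: ρ_n is positive semidefinite (for every f : Ω_n → ℂ, the number ∑_{ω, ω' ∈ Ω_n} conj(f ω) · a_n(ω) · conj(a_n(ω')) · f ω' is a nonnegative real), and ⟨ρ_n 1_n, 1_n⟩ = ∑_{ω, ω' ∈ Ω_n} a_n(ω) · conj(a_n(ω')) = 1, where 1_n is the constant function 1. (This is the positivity and normalization part of Theorem 5.1: an amplitude process is a quantum sequential growth process.) -/
import Mathlib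


variable {V : Type*} [Fintype V] [DecidableEq V]

/-- An `n`-path: `ω 0 = v₀` and each entry is a successor of the previous one. -/
def IsPath (v₀ : V) (succ : V → Finset V) (n : ℕ) (ω : Fin n → V) : Prop :=
  (∀ i : Fin n, (i : ℕ) = 0 → ω i = v₀) ∧
    ∀ i j : Fin n, (j : ℕ) = (i : ℕ) + 1 → ω j ∈ succ (ω i)

instance (v₀ : V) (succ : V → Finset V) (n : ℕ) :
    DecidablePred (IsPath v₀ succ n) := fun ω => by
  unfold IsPath; infer_instance

/-- `Ω_n`, the finite set of `n`-paths. -/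
def pathSet (v₀ : V) (succ : V → Finset V) (n : ℕ) : Finset (Fin n → V) :=
  Finset.univ.filter (IsPath v₀ succ n)

/-- The amplitude `a_n(ω) = ∏_{k=0}^{n-2} a (ω k) (ω (k+1))`. -/
noncomputable def amp (a : V → V → ℂ) (n : ℕ) (ω : Fin n → V) : ℂ :=
  ∏ k : Fin (n - 1),
    a (ω ⟨k.1, by have := k.2; omega⟩) (ω ⟨k.1 + 1, by have := k.2; omega⟩)

/-- The decoherence functional `D_n(A,B) = (∑_{ω ∈ A} a_n(ω)) ⬝ conj (∑_{ω' ∈ B} a_n(ω'))`. -/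
noncomputable def Dfun (a : V → V → ℂ) (n : ℕ) (A B : Finset (Fin n → V)) : ℂ :=
  (∑ ω ∈ A, amp a n ω) * (starRingEnd ℂ) (∑ ω ∈ B, amp a n ω)

/-- The `q`-measure `μ_n(A) = |∑_{ω ∈ A} a_n(ω)|²`. -/
noncomputable def qMeas (a : V → V → ℂ) (n : ℕ) (A : Finset (Fin n → V)) : ℝ :=
  Complex.normSq (∑ ω ∈ A, amp a n ω)

/-- The one-step extension `A→ = {ω ∈ Ω_{n+1} : ω|_{Fin n} ∈ A}`. -/
def ext (v₀ : V) (succ : V → Finset V) {n : ℕ} (A : Finset (Fin n → V)) :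
    Finset (Fin (n + 1) → V) :=
  (pathSet v₀ succ (n + 1)).filter (fun ω => (fun k : Fin n => ω k.castSucc) ∈ A)

lemma amp_succ (a : V → V → ℂ) (n : ℕ) (ω : Fin (n+1) → V) :
    amp a (n+1) ω = ∏ k : Fin n, a (ω k.castSucc) (ω k.succ) := rfl

lemma amp_snoc (a : V → V → ℂ) (n : ℕ) (ω : Fin (n+1) → V) (y : V) :
    amp a (n+2) (Fin.snoc ω y) = amp a (n+1) ω * a (ω (Fin.last n)) y := by
  rw [amp_succ, amp_succ, Fin.prod_univ_castSucc]
  congr 1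
  · apply Finset.prod_congr rfl
    intro j _
    have h1 : (Fin.snoc ω y : Fin (n+2) → V) j.castSucc.castSucc = ω j.castSucc :=
      Fin.snoc_castSucc ..
    have h2 : (Fin.snoc ω y : Fin (n+2) → V) j.castSucc.succ = ω j.succ := by
      rw [Fin.succ_castSucc]; exact Fin.snoc_castSucc ..
    rw [h1, h2]
  · have h1 : (Fin.snoc ω y : Fin (n+2) → V) (Fin.last n).castSucc = ω (Fin.last n) :=
      Fin.snoc_castSucc ..
    have h2 : (Fin.snoc ω y : Fin (n+2) → V) (Fin.last n).succ = y := by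
      rw [Fin.succ_last]; exact Fin.snoc_last ..
    rw [h1, h2]

lemma isPath_snoc_iff (v₀ : V) (succ : V → Finset V) (n : ℕ) (ω : Fin (n+1) → V) (y : V) :
    IsPath v₀ succ (n+2) (Fin.snoc ω y) ↔
      IsPath v₀ succ (n+1) ω ∧ y ∈ succ (ω (Fin.last n)) := by
  constructor
  · rintro ⟨h0, hstep⟩
    refine ⟨⟨?_, ?_⟩, ?_⟩
    · intro i hi
      have := h0 i.castSucc (by simpa using hi)
      simpa using this
    · intro i j hj
      have := hstep i.castSucc j.castSucc (by simpa using hj)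
      simpa using this
    · have := hstep (Fin.last n).castSucc (Fin.last (n+1)) (by simp)
      have e1 : (Fin.snoc ω y : Fin (n+2) → V) (Fin.last (n+1)) = y := Fin.snoc_last ..
      have e2 : (Fin.snoc ω y : Fin (n+2) → V) (Fin.last n).castSucc = ω (Fin.last n) :=
        Fin.snoc_castSucc ..
      rwa [e1, e2] at this
  · rintro ⟨⟨h0, hstep⟩, hy⟩
    constructor
    · intro i hi
      have hi' : i = (0 : Fin (n+1)).castSucc := by
        ext; simpa using hi
      rw [hi', Fin.snoc_castSucc]
      exact h0 0 rfl
    · intro i j hj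
      rcases Fin.eq_castSucc_or_eq_last j with ⟨j', rfl⟩ | rfl
      · rcases Fin.eq_castSucc_or_eq_last i with ⟨i', rfl⟩ | rfl
        · rw [Fin.snoc_castSucc, Fin.snoc_castSucc]
          exact hstep i' j' (by simpa using hj)
        · exfalso
          have : (j' : ℕ) < n + 1 := j'.2
          simp [Fin.last] at hj
          omega
      · have hi' : i = (Fin.last n).castSucc := by
          ext
          have := hj
          simp [Fin.last] at this ⊢
          omega
        rw [hi', Fin.snoc_last, Fin.snoc_castSucc]
        exact hy

lemma sum_amp_pathSet (v₀ : V) (succ : V → Finset V) (a : V → V → ℂ)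
    (ha : ∀ x : V, ∑ y ∈ succ x, a x y = 1) :
    ∀ n : ℕ, ∑ ω ∈ pathSet v₀ succ (n+1), amp a (n+1) ω = 1 := by
  intro n
  induction n with
  | zero =>
    have : pathSet v₀ succ 1 = {fun _ => v₀} := by
      ext ω
      simp only [pathSet, Finset.mem_filter, Finset.mem_univ, true_and,
        Finset.mem_singleton, IsPath]
      constructor
      · rintro ⟨h0, -⟩
        funext i
        have : (i : ℕ) = 0 := by omega
        exact h0 i this
      · rintro rfl
        exact ⟨fun i _ => rfl, fun i j hj => by have := i.2; have := j.2; omega⟩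
    rw [this]
    simp [amp]
  | succ m ih =>
    have key : ∑ ω ∈ pathSet v₀ succ (m+2), amp a (m+2) ω =
        ∑ p ∈ (pathSet v₀ succ (m+1)).sigma (fun ω => succ (ω (Fin.last m))),
          amp a (m+2) (Fin.snoc p.1 p.2) := by
      refine Finset.sum_bij' (fun ω _ => ⟨Fin.init ω, ω (Fin.last (m+1))⟩)
        (fun p _ => Fin.snoc p.1 p.2) ?_ ?_ ?_ ?_ ?_
      · intro ω hω
        simp only [pathSet, Finset.mem_filter, Finset.mem_univ, true_and] at hω
        have : IsPath v₀ succ (m+2) (Fin.snoc (Fin.init ω) (ω (Fin.last (m+1)))) := by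
          rw [Fin.snoc_init_self]; exact hω
        rw [isPath_snoc_iff] at this
        simp only [Finset.mem_sigma, pathSet, Finset.mem_filter, Finset.mem_univ, true_and]
        exact ⟨this.1, by simpa [Fin.init] using this.2⟩
      · intro p hp
        simp only [Finset.mem_sigma, pathSet, Finset.mem_filter, Finset.mem_univ,
          true_and] at hp ⊢
        rw [isPath_snoc_iff]
        exact hp
      · intro ω _
        exact Fin.snoc_init_self ω
      · rintro ⟨ω', y⟩ _
        simp
      · intro ω _
        rw [Fin.snoc_init_self]
    rw [key, Finset.sum_sigma]
    have : ∀ ω ∈ pathSet v₀ succ (m+1),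
        ∑ y ∈ succ (ω (Fin.last m)), amp a (m+2) (Fin.snoc ω y) = amp a (m+1) ω := by
      intro ω _
      simp only [amp_snoc]
      rw [← Finset.mul_sum, ha, mul_one]
    rw [Finset.sum_congr rfl this, ih]


open scoped ComplexOrder

/-- **Theorem 5.1** (positivity and normalization part): the operator `ρ_n` with
matrix entries `D_n(ω, ω') = a_n(ω) ⬝ conj (a_n(ω'))` is positive semidefinite and
satisfies `⟨ρ_n 1_n, 1_n⟩ = 1`. -/
theorem stmt3 (v₀ : V) (succ : V → Finset V) (a : V → V → ℂ)
    (ha : ∀ x : V, ∑ y ∈ succ x, a x y = 1) (n : ℕ) (hn : 1 ≤ n) :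
    (∀ f : (Fin n → V) → ℂ,
      0 ≤ ∑ ω ∈ pathSet v₀ succ n, ∑ ω' ∈ pathSet v₀ succ n,
        (starRingEnd ℂ) (f ω) * (amp a n ω * (starRingEnd ℂ) (amp a n ω')) * f ω') ∧
      ∑ ω ∈ pathSet v₀ succ n, ∑ ω' ∈ pathSet v₀ succ n,
        amp a n ω * (starRingEnd ℂ) (amp a n ω') = 1 := by
  obtain ⟨m, rfl⟩ : ∃ m, n = m + 1 := ⟨n - 1, by omega⟩
  have hsum := sum_amp_pathSet v₀ succ a ha m
  constructor
  · intro f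
    set z : ℂ := ∑ ω ∈ pathSet v₀ succ (m+1), (starRingEnd ℂ) (f ω) * amp a (m+1) ω with hz
    have : ∑ ω ∈ pathSet v₀ succ (m+1), ∑ ω' ∈ pathSet v₀ succ (m+1),
        (starRingEnd ℂ) (f ω) * (amp a (m+1) ω * (starRingEnd ℂ) (amp a (m+1) ω')) * f ω'
        = z * (starRingEnd ℂ) z := by
      rw [hz, map_sum, Finset.sum_mul_sum]
      apply Finset.sum_congr rfl; intro ω _
      apply Finset.sum_congr rfl; intro ω' _
      simp only [map_mul, Complex.conj_conj]
      ring
    rw [this, mul_comm]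
    exact star_mul_self_nonneg z
  · have : ∑ ω ∈ pathSet v₀ succ (m+1), ∑ ω' ∈ pathSet v₀ succ (m+1),
        amp a (m+1) ω * (starRingEnd ℂ) (amp a (m+1) ω')
        = (∑ ω ∈ pathSet v₀ succ (m+1), amp a (m+1) ω) *
          (starRingEnd ℂ) (∑ ω ∈ pathSet v₀ succ (m+1), amp a (m+1) ω) := by
      rw [map_sum, Finset.sum_mul_sum]
    rw [this, hsum]; simp
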